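/- Let $\mathcal{F} = \{\phi_1,\dots,\phi_k\}$ be an IFS of contractions over a complete metric space with connected attractor $K$, all Lipschitz constants $L_i = \operatorname{Lip}(\phi_i) \in (0,1)$. Fix a finite word $w$ over $\{1,\dots,k\}$ and $0 < \delta < L_w$. If $x, y \in K_w := \phi_w(K)$, then there exist distinct words $w_1, \dots, w_n \in A_w^*(\delta)$ such that $x \in K_{w_1}$, $y \in K_{w_n}$, and $K_{w_i} \cap K_{w_{i+1}} \neq \emptyset$ for all $1 \leq i \leq n-1$. -/

import Mathlib

open Set

/-- `φ_w = φ_{i₁} ∘ ⋯ ∘ φ_{iₙ}` for a word `w = i₁ ⋯ iₙ`. -/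
noncomputable def compWord {X : Type*} {k : ℕ} (φ : Fin k → X → X)
    (w : List (Fin k)) : X → X :=
  w.foldr (fun i g => φ i ∘ g) id

/-- The weight of a finite word: `L_w = L_{i₁} ⋯ L_{iₙ}`, with `L_ε = 1`. -/
noncomputable def wordWeight {k : ℕ} (L : Fin k → ℝ) (w : List (Fin k)) : ℝ :=
  (w.map L).prod

/-- Membership in `A^*(δ)`. -/
def memAstar {k : ℕ} (L : Fin k → ℝ) (δ : ℝ) (u : List (Fin k)) : Prop :=
  u ≠ [] ∧ wordWeight L u < δ ∧ δ ≤ wordWeight L u.dropLast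


private lemma chainLemma {X : Type*} {ι : Type*} [TopologicalSpace X]
    {C : Set X} (hC : IsPreconnected C)
    {S : Set ι} (hS : S.Finite) {F : ι → Set X} (hF : ∀ i ∈ S, IsClosed (F i))
    (hcov : ∀ z ∈ C, ∃ i ∈ S, z ∈ F i) {x y : X} (hx : x ∈ C) (hy : y ∈ C) :
    ∃ (n : ℕ) (f : ℕ → ι), 0 < n ∧ (∀ i < n, ∀ j < n, f i = f j → i = j) ∧
      (∀ i < n, f i ∈ S) ∧ x ∈ F (f 0) ∧ y ∈ F (f (n - 1)) ∧
      ∀ i, i + 1 < n → (F (f i) ∩ F (f (i + 1))).Nonempty := by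
  classical
  obtain ⟨a, haS, hxa⟩ := hcov x hx
  set r : ι → ι → Prop := fun p q => p ∈ S ∧ q ∈ S ∧ (F p ∩ F q ∩ C).Nonempty with hr
  set R : Set ι := {j | Relation.ReflTransGen r a j ∧ j ∈ S} with hRdef
  have hRsub : R ⊆ S := fun j hj => hj.2
  have hRfin : R.Finite := hS.subset hRsub
  have haR : a ∈ R := ⟨Relation.ReflTransGen.refl, haS⟩
  set A : Set X := ⋃ j ∈ R, F j with hAdef
  set B : Set X := ⋃ j ∈ (S \ R), F j with hBdef
  have hAcl : IsClosed A := hRfin.isClosed_biUnion fun j hj => hF j (hRsub hj)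
  have hBcl : IsClosed B := (hS.subset diff_subset).isClosed_biUnion fun j hj => hF j hj.1
  have hsub : C ⊆ A ∪ B := by
    intro z hz
    obtain ⟨j, hjS, hzj⟩ := hcov z hz
    by_cases hjR : j ∈ R
    · exact Or.inl (mem_biUnion hjR hzj)
    · exact Or.inr (mem_biUnion ⟨hjS, hjR⟩ hzj)
  have hempty : ¬ (C ∩ (A ∩ B)).Nonempty := by
    rintro ⟨z, hzC, hzA, hzB⟩
    obtain ⟨j, hjR, hzj⟩ := mem_iUnion₂.1 hzA
    obtain ⟨j', hj', hzj'⟩ := mem_iUnion₂.1 hzB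
    exact hj'.2 ⟨hjR.1.tail ⟨hjR.2, hj'.1, z, ⟨hzj, hzj'⟩, hzC⟩, hj'.1⟩
  have hCA : C ⊆ A := by
    intro z hz
    rcases hsub hz with h | h
    · exact h
    · exact absurd (isPreconnected_closed_iff.1 hC A B hAcl hBcl hsub
        ⟨x, hx, mem_biUnion haR hxa⟩ ⟨z, hz, h⟩) hempty
  obtain ⟨b, hbR, hyb⟩ := mem_iUnion₂.1 (hCA hy)
  obtain ⟨l, hl, hlast⟩ := List.exists_isChain_cons_of_relationReflTransGen hbR.1
  have hPQ : ∃ n : ℕ, 0 < n ∧ ∃ f : ℕ → ι, f 0 ∈ S ∧ x ∈ F (f 0) ∧ y ∈ F (f (n - 1)) ∧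
      ∀ i, i + 1 < n → r (f i) (f (i + 1)) := by
    refine ⟨(a :: l).length, by simp, fun i => (a :: l).getD i a, ?_, ?_, ?_, ?_⟩
    · simpa using haS
    · simpa using hxa
    · have hlen : (a :: l).length - 1 < (a :: l).length := by simp
      have heq : (a :: l).getD ((a :: l).length - 1) a = b := by
        rw [List.getD_eq_getElem _ _ hlen, ← hlast, List.getLast_eq_getElem]
      show y ∈ F ((a :: l).getD ((a :: l).length - 1) a)
      rw [heq]
      exact hyb
    · intro i hi
      have hch : List.IsChain r (a :: l) := hl
      have h2 := List.isChain_iff_getElem.1 hch i (by simpa using hi)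
      show r ((a :: l).getD i a) ((a :: l).getD (i + 1) a)
      rw [List.getD_eq_getElem _ _ (Nat.lt_of_succ_lt hi), List.getD_eq_getElem _ _ hi]
      simpa [List.get_eq_getElem] using h2
  set N := Nat.find hPQ with hNdef
  obtain ⟨hN0, f, hf0S, hfx, hfy, hfrel⟩ : 0 < N ∧ ∃ f : ℕ → ι, f 0 ∈ S ∧ x ∈ F (f 0) ∧
      y ∈ F (f (N - 1)) ∧ ∀ i, i + 1 < N → r (f i) (f (i + 1)) := Nat.find_spec hPQ
  have key : ∀ i j, i < j → j < N → f i = f j → False := by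
    intro i j hij hjN hfeq
    set d := j - i with hd
    have hd0 : 0 < d := by omega
    have hidj : i + d = j := by omega
    have hlt : N - d < N := by omega
    refine Nat.find_min hPQ hlt ⟨by omega, fun t => if t ≤ i then f t else f (t + d), ?_, ?_, ?_, ?_⟩
    · simpa using hf0S
    · simpa using hfx
    · show y ∈ F (if N - d - 1 ≤ i then f (N - d - 1) else f (N - d - 1 + d))
      by_cases hcase : N - d - 1 ≤ i
      · have hj' : j = N - 1 := by omega
        have hi' : N - d - 1 = i := by omega
        rw [if_pos hcase, hi', hfeq, hj']
        exact hfy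
      · have h1 : (N - d - 1) + d = N - 1 := by omega
        rw [if_neg hcase, h1]
        exact hfy
    · intro t ht
      show r (if t ≤ i then f t else f (t + d)) (if t + 1 ≤ i then f (t + 1) else f (t + 1 + d))
      by_cases h1 : t + 1 ≤ i
      · rw [if_pos h1, if_pos (by omega : t ≤ i)]
        exact hfrel t (by omega)
      · by_cases h2 : t ≤ i
        · have hti : t = i := by omega
          have h3 : (t + 1) + d = j + 1 := by omega
          rw [if_pos h2, if_neg h1, h3, hti, hfeq]
          exact hfrel j (by omega)
        · rw [if_neg h2, if_neg (by omega : ¬ t + 1 ≤ i)]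
          have h4 : t + d + 1 = t + 1 + d := by omega
          have := hfrel (t + d) (by omega)
          rwa [h4] at this
  refine ⟨N, f, hN0, ?_, ?_, hfx, hfy, ?_⟩
  · intro i hi j hj hfeq
    by_contra hne
    rcases Nat.lt_or_ge i j with h | h
    · exact key i j h hj hfeq
    · exact key j i (by omega) hi hfeq.symm
  · intro i hi
    rcases Nat.eq_zero_or_pos i with h0 | h0
    · rw [h0]; exact hf0S
    · have h' := hfrel (i - 1) (by omega)
      rw [show i - 1 + 1 = i by omega] at h'
      exact h'.2.1
  · intro i hi
    obtain ⟨z, hz, _⟩ := (hfrel i hi).2.2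
    exact ⟨z, hz⟩


private lemma compWord_nil {X : Type*} {k : ℕ} (φ : Fin k → X → X) :
    compWord φ [] = id := rfl

private lemma compWord_cons {X : Type*} {k : ℕ} (φ : Fin k → X → X) (i : Fin k)
    (v : List (Fin k)) : compWord φ (i :: v) = φ i ∘ compWord φ v := rfl

private lemma compWord_append {X : Type*} {k : ℕ} (φ : Fin k → X → X)
    (v u : List (Fin k)) : compWord φ (v ++ u) = compWord φ v ∘ compWord φ u := by
  induction v with
  | nil => rfl
  | cons i v ih => simp [compWord_cons, ih]; rfl

private lemma wordWeight_nil {k : ℕ} (L : Fin k → ℝ) : wordWeight L [] = 1 := rfl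

private lemma wordWeight_cons {k : ℕ} (L : Fin k → ℝ) (i : Fin k) (v : List (Fin k)) :
    wordWeight L (i :: v) = L i * wordWeight L v := by
  simp [wordWeight]

private lemma wordWeight_append {k : ℕ} (L : Fin k → ℝ) (v u : List (Fin k)) :
    wordWeight L (v ++ u) = wordWeight L v * wordWeight L u := by
  simp [wordWeight]

private lemma wordWeight_pos {k : ℕ} {L : Fin k → ℝ} (hL : ∀ i, 0 < L i)
    (v : List (Fin k)) : 0 < wordWeight L v := by
  induction v with
  | nil => norm_num [wordWeight_nil]
  | cons i v ih => rw [wordWeight_cons]; exact mul_pos (hL i) ih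

private lemma wordWeight_le_pow {k : ℕ} {L : Fin k → ℝ} {M : ℝ} (hM0 : 0 ≤ M)
    (hle : ∀ i, L i ≤ M) (hL : ∀ i, 0 < L i) (v : List (Fin k)) :
    wordWeight L v ≤ M ^ v.length := by
  induction v with
  | nil => simp [wordWeight_nil]
  | cons i v ih =>
    rw [wordWeight_cons, List.length_cons, pow_succ, mul_comm (M ^ v.length) M]
    exact mul_le_mul (hle i) ih (wordWeight_pos hL v).le hM0

/-- Chain lemma: in a connected attractor, any two points of a cylinder `K_w` are joined by
a chain of cylinders at scale `δ`. -/
theorem stmt7 {X : Type*} [MetricSpace X] [CompleteSpace X] {k : ℕ}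
    (φ : Fin k → X → X) (L : Fin k → ℝ)
    (hL : ∀ i, 0 < L i ∧ L i < 1)
    (hLip : ∀ i x y, dist (φ i x) (φ i y) ≤ L i * dist x y)
    (K : Set X) (hKne : K.Nonempty) (hKc : IsCompact K)
    (hK : K = ⋃ i, φ i '' K) (hconn : IsConnected K)
    (w : List (Fin k)) (δ : ℝ) (hδ0 : 0 < δ) (hδ : δ < wordWeight L w)
    (x y : X) (hx : x ∈ compWord φ w '' K) (hy : y ∈ compWord φ w '' K) :
    ∃ (n : ℕ) (ws : ℕ → List (Fin k)), 0 < n ∧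
      (∀ i < n, ∀ j < n, ws i = ws j → i = j) ∧
      (∀ i < n, w <+: ws i ∧ memAstar L δ (ws i)) ∧
      x ∈ compWord φ (ws 0) '' K ∧ y ∈ compWord φ (ws (n - 1)) '' K ∧
      ∀ i, i + 1 < n →
        (compWord φ (ws i) '' K ∩ compWord φ (ws (i + 1)) '' K).Nonempty := by
  classical
  obtain ⟨p₀, hp₀⟩ := hKne
  obtain ⟨i₀, -⟩ := mem_iUnion.1 (hK ▸ hp₀)
  haveI : Nonempty (Fin k) := ⟨i₀⟩
  have hLpos : ∀ i, 0 < L i := fun i => (hL i).1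
  set Lmax : ℝ := Finset.univ.sup' Finset.univ_nonempty L with hLmaxdef
  have hle : ∀ i, L i ≤ Lmax := fun i => Finset.le_sup' L (Finset.mem_univ i)
  have hM0 : 0 < Lmax := lt_of_lt_of_le (hL i₀).1 (hle i₀)
  have hM1 : Lmax < 1 := (Finset.sup'_lt_iff _).2 fun i _ => (hL i).2
  have hcont : ∀ v : List (Fin k), Continuous (compWord φ v) := by
    intro v
    induction v with
    | nil => exact continuous_id
    | cons i v ih =>
      rw [compWord_cons]
      exact Continuous.comp
        (LipschitzWith.continuous (K := ⟨L i, (hL i).1.le⟩)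
          (LipschitzWith.of_dist_le_mul fun a b => by exact hLip i a b)) ih
  have hFcl : ∀ u : List (Fin k), IsClosed (compWord φ u '' K) :=
    fun u => (hKc.image (hcont u)).isClosed
  -- covering lemma
  have cover : ∀ n (v : List (Fin k)), δ ≤ wordWeight L v →
      wordWeight L v < δ * Lmax⁻¹ ^ n →
      ∀ z ∈ compWord φ v '' K, ∃ u, v <+: u ∧ memAstar L δ u ∧ z ∈ compWord φ u '' K := by
    intro n
    induction n with
    | zero =>
      intro v h1 h2
      simp only [pow_zero, mul_one] at h2
      exact absurd (h1.trans_lt h2) (lt_irrefl δ)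
    | succ n ih =>
      intro v h1 h2 z hz
      obtain ⟨p, hp, hpz⟩ := hz
      obtain ⟨i, q, hq, hqp⟩ : ∃ i q, q ∈ K ∧ φ i q = p := by
        obtain ⟨i, hpi⟩ := mem_iUnion.1 (hK ▸ hp)
        obtain ⟨q, hq, hqp⟩ := hpi
        exact ⟨i, q, hq, hqp⟩
      have hzmem : z ∈ compWord φ (v ++ [i]) '' K := by
        refine ⟨q, hq, ?_⟩
        rw [compWord_append]
        show compWord φ v (φ i q) = z
        rw [hqp, hpz]
      have hw : wordWeight L (v ++ [i]) = wordWeight L v * L i := by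
        rw [wordWeight_append, wordWeight_cons, wordWeight_nil, mul_one]
      by_cases hlt : wordWeight L (v ++ [i]) < δ
      · refine ⟨v ++ [i], List.prefix_append v [i], ⟨by simp, hlt, ?_⟩, hzmem⟩
        rw [List.dropLast_concat]
        exact h1
      · push_neg at hlt
        have hb : wordWeight L (v ++ [i]) < δ * Lmax⁻¹ ^ n := by
          rw [hw]
          have hc1 : wordWeight L v * L i ≤ wordWeight L v * Lmax :=
            mul_le_mul_of_nonneg_left (hle i) (wordWeight_pos hLpos v).le
          have hc2 : wordWeight L v * Lmax < δ * Lmax⁻¹ ^ (n + 1) * Lmax :=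
            mul_lt_mul_of_pos_right h2 hM0
          have hc3 : δ * Lmax⁻¹ ^ (n + 1) * Lmax = δ * Lmax⁻¹ ^ n := by
            rw [pow_succ, ← mul_assoc, mul_assoc _ _ Lmax, inv_mul_cancel₀ hM0.ne',
              mul_one]
          linarith
        obtain ⟨u, hpre, hmem, hzu⟩ := ih (v ++ [i]) hlt hb z hzmem
        exact ⟨u, (List.prefix_append v [i]).trans hpre, hmem, hzu⟩
  -- the collection A_w^*(δ) is finite
  obtain ⟨N, hN⟩ := exists_pow_lt_of_lt_one hδ0 hM1
  set A : Set (List (Fin k)) := {u | w <+: u ∧ memAstar L δ u} with hAdef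
  have hAfin : A.Finite := by
    refine (List.finite_length_le (Fin k) N).subset ?_
    rintro u ⟨-, hne, -, hdrop⟩
    show u.length ≤ N
    by_contra hlen
    push_neg at hlen
    have h1 : wordWeight L u.dropLast ≤ Lmax ^ u.dropLast.length :=
      wordWeight_le_pow hM0.le hle hLpos _
    have h2 : u.dropLast.length = u.length - 1 := List.length_dropLast
    have h4 : 1 ≤ u.length := List.length_pos_iff.2 hne
    have h3 : Lmax ^ (u.length - 1) ≤ Lmax ^ N :=
      pow_le_pow_of_le_one hM0.le hM1.le (by omega)
    rw [h2] at h1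
    linarith
  have hCconn : IsPreconnected (compWord φ w '' K) :=
    (hconn.image _ (hcont w).continuousOn).isPreconnected
  have hcov : ∀ z ∈ compWord φ w '' K, ∃ u ∈ A, z ∈ compWord φ u '' K := by
    intro z hz
    obtain ⟨n₀, hn₀⟩ := pow_unbounded_of_one_lt (wordWeight L w / δ) ((one_lt_inv₀ hM0).2 hM1)
    rw [div_lt_iff₀ hδ0, mul_comm] at hn₀
    obtain ⟨u, hpre, hmem, hzu⟩ := cover n₀ w hδ.le hn₀ z hz
    exact ⟨u, ⟨hpre, hmem⟩, hzu⟩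
  obtain ⟨n, f, hn0, hinj, hmemS, hx0, hyn, hchain⟩ :=
    chainLemma hCconn hAfin (fun u _ => hFcl u) hcov hx hy
  exact ⟨n, f, hn0, hinj, fun i hi => hmemS i hi, hx0, hyn, hchain⟩
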